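/- Let 𝕄 = (π, M, B, F, f, h) be a connected filled bundle. Then the map c_M : B_M → B, sending a connected component of π⁻¹(p) to p, is a covering map, and Rls π : M → B_M, sending a point of π⁻¹(p) to the connected component of π⁻¹(p) containing it, is the projection of a smooth fiber bundle with connected fiber over the connected base B_M. -/

import Mathlib

/-!
Pelayo–Tang, Lemma 2.14 (the release of a connected filled bundle).  The base `B_M` of
the release is formalized as the quotient of `M` identifying two points iff they lie in
the same fiber of `π` and in the same connected component of that fiber; it carries the
canonical quotient topology (which agrees with the unique natural structure for which
the maps `λ_U` are homeomorphisms).  The claim is formalized at the topological level: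
`c_M : B_M → B` is a covering map, `B_M` is connected, and `Rls π : M → B_M` is the
projection of a locally trivial fiber bundle with connected fibers whose model fiber
`F_M` is a connected component of `F`.
-/

open Topology Set MeasureTheory
open scoped Manifold ENNReal

noncomputable section

/-- The collection of connected components of a subset `s`. -/
def connCompsIn {X : Type*} [TopologicalSpace X] (s : Set X) : Set (Set X) :=
  {C | ∃ x ∈ s, C = connectedComponentIn s x}

/-- The unbounded (noncompact closure) connected components of `s`. -/
def unbddCompsIn {X : Type*} [TopologicalSpace X] (s : Set X) : Set (Set X) :=
  {C | C ∈ connCompsIn s ∧ ¬ IsCompact (closure C)}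

variable {E_B : Type*} [NormedAddCommGroup E_B] [NormedSpace ℝ E_B]
  {H_B : Type*} [TopologicalSpace H_B] (I_B : ModelWithCorners ℝ E_B H_B)
  {E_F : Type*} [NormedAddCommGroup E_F] [NormedSpace ℝ E_F]
  {H_F : Type*} [TopologicalSpace H_F] (I_F : ModelWithCorners ℝ E_F H_F)
  {E_M : Type*} [NormedAddCommGroup E_M] [NormedSpace ℝ E_M]
  {H_M : Type*} [TopologicalSpace H_M] (I_M : ModelWithCorners ℝ E_M H_M)
  (B : Type*) [TopologicalSpace B] [ChartedSpace H_B B] [IsManifold I_B (⊤ : ℕ∞) B]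
  (F : Type*) [TopologicalSpace F] [ChartedSpace H_F F] [IsManifold I_F (⊤ : ℕ∞) F]
  (M : Type*) [TopologicalSpace M] [ChartedSpace H_M M] [IsManifold I_M (⊤ : ℕ∞) M]

/-- A filled bundle `(π, M, B, F, f, h)`. -/
structure FilledBundle where
  π : M → B
  f : M → ℝ
  h : F → ℝ
  smooth_π : ContMDiff I_M I_B (⊤ : ℕ∞) π
  smooth_f : ContMDiff I_M 𝓘(ℝ, ℝ) (⊤ : ℕ∞) f
  smooth_h : ContMDiff I_F 𝓘(ℝ, ℝ) (⊤ : ℕ∞) h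
  atlas : Set (Bundle.Trivialization F π)
  atlas_smooth : ∀ t ∈ atlas, ContMDiffOn I_M (I_B.prod I_F) (⊤ : ℕ∞) (↑t) t.source
  atlas_smooth_symm : ∀ t ∈ atlas,
    ContMDiffOn (I_B.prod I_F) I_M (⊤ : ℕ∞) t.toOpenPartialHomeomorph.symm t.target
  atlas_covers : ∀ p : B, ∃ t ∈ atlas, p ∈ t.baseSet
  /-- the structure group is contained in `Diff(F, h)`: the transition maps preserve `h` -/
  atlas_trans_h : ∀ t ∈ atlas, ∀ t' ∈ atlas, ∀ p : B, p ∈ t.baseSet → p ∈ t'.baseSet →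
    ∀ y : F, h (t' (t.toOpenPartialHomeomorph.symm (p, y))).2 = h y
  /-- on each chart, `f = h ∘ pr₂ ∘ φ_U` -/
  atlas_filler : ∀ t ∈ atlas, ∀ x ∈ t.source, f x = h (t x).2

namespace FilledBundle

variable {I_B I_F I_M B F M}
variable (𝕄 : FilledBundle I_B I_F I_M B F M)

/-- `𝕄` is an exhausted bundle: `f` and `h` are exhaustion functions. -/
def IsExhausted : Prop :=
  (∀ r : ℝ, IsCompact (𝕄.f ⁻¹' Iic r)) ∧ (∀ r : ℝ, IsCompact (𝕄.h ⁻¹' Iic r))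

/-- `α` is a regular value of the filler `f` (including values not attained). -/
def IsRegularValue (α : ℝ) : Prop :=
  ∀ x : M, 𝕄.f x = α → mfderiv I_M 𝓘(ℝ, ℝ) 𝕄.f x ≠ 0

/-- `A` is a filled subspace of `𝕄`: in each chart of the atlas it has the form
`U × P` for some `P ⊆ F`. -/
def FilledSubspace (A : Set M) : Prop :=
  ∀ t ∈ 𝕄.atlas, ∃ P : Set F, (↑t : M → B × F) '' (A ∩ t.source) = t.baseSet ×ˢ P

/-- The restriction `𝕄|_A` has connected fiber. -/
def HasConnectedFiber (A : Set M) : Prop :=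
  ∀ t ∈ 𝕄.atlas, t.baseSet.Nonempty →
    IsConnected (Prod.snd '' ((↑t : M → B × F) '' (A ∩ t.source)))

variable [MeasurableSpace M] [BorelSpace M]

/-- A fiber volume form on `𝕄`, encoded through the family of fiberwise measures it
induces: a family `p ↦ (meas p)` of measures on `M`, each concentrated on the fiber
`π⁻¹(p)`, positive on open sets meeting the fiber and finite on compact sets, depending
smoothly on `p` in the sense of integration against compactly supported continuous test
functions.  Under this encoding `φ*ω = τ` for a (fiber) diffeomorphism `φ` becomes
`Measure.map φ (τ.meas p) = ω.meas p` for all `p`. -/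
structure FiberVolumeForm where
  meas : B → Measure M
  fiber_supported : ∀ p : B, meas p ((𝕄.π ⁻¹' {p})ᶜ) = 0
  open_pos : ∀ p : B, ∀ U : Set M, IsOpen U → (U ∩ 𝕄.π ⁻¹' {p}).Nonempty → meas p U ≠ 0
  finite_on_compacts : ∀ p : B, ∀ K : Set M, IsCompact K → meas p K < ⊤
  smooth_family : ∀ g : M → ℝ, Continuous g → HasCompactSupport g →
    ContMDiff I_B 𝓘(ℝ, ℝ) (⊤ : ℕ∞) fun p => ∫ x, g x ∂(meas p)

end FilledBundle

namespace FilledBundle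

variable {E_B : Type u_1} [NormedAddCommGroup E_B] [NormedSpace ℝ E_B]
  {H_B : Type u_2} [TopologicalSpace H_B] {I_B : ModelWithCorners ℝ E_B H_B}
  {E_F : Type u_3} [NormedAddCommGroup E_F] [NormedSpace ℝ E_F]
  {H_F : Type u_4} [TopologicalSpace H_F] {I_F : ModelWithCorners ℝ E_F H_F}
  {E_M : Type u_5} [NormedAddCommGroup E_M] [NormedSpace ℝ E_M]
  {H_M : Type u_6} [TopologicalSpace H_M] {I_M : ModelWithCorners ℝ E_M H_M}
  {B : Type u_7} [TopologicalSpace B] [ChartedSpace H_B B] [IsManifold I_B (⊤ : ℕ∞) B]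
  {F : Type u_8} [TopologicalSpace F] [ChartedSpace H_F F] [IsManifold I_F (⊤ : ℕ∞) F]
  {M : Type u_9} [TopologicalSpace M] [ChartedSpace H_M M] [IsManifold I_M (⊤ : ℕ∞) M]
  (𝕄 : FilledBundle I_B I_F I_M B F M)

/-- Two points of `M` are fiberwise-component equivalent if they lie in the same fiber
of `π` and in the same connected component of that fiber. -/
def fiberRel (x y : M) : Prop :=
  𝕄.π x = 𝕄.π y ∧ y ∈ connectedComponentIn (𝕄.π ⁻¹' {𝕄.π x}) x

/-- The base `B_M = ⨆_{p ∈ B} π₀(π⁻¹(p))` of the release of `𝕄`, with its canonical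
(quotient) topology. -/
def RlsBase : Type u_9 := Quot 𝕄.fiberRel

instance : TopologicalSpace 𝕄.RlsBase := instTopologicalSpaceQuot

/-- The projection `Rls π : M → B_M` of the release. -/
def rlsProj : M → 𝕄.RlsBase := Quot.mk 𝕄.fiberRel

/-- The covering `c_M : B_M → B`. -/
def rlsCover : 𝕄.RlsBase → B := Quot.lift 𝕄.π fun _ _ hxy => hxy.1


/-- The model space of a manifold (with corners) is locally connected: it is a retract
of the model vector space via the globally continuous map `I.symm`. -/
theorem modelLocallyConnected {𝕜 : Type*} [NontriviallyNormedField 𝕜]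
    {E : Type*} [NormedAddCommGroup E] [NormedSpace 𝕜 E] {H : Type*} [TopologicalSpace H]
    (I : ModelWithCorners 𝕜 E H) [LocallyConnectedSpace E] : LocallyConnectedSpace H := by
  rw [locallyConnectedSpace_iff_connected_subsets]
  intro x U hU
  have hpre : I.symm ⁻¹' U ∈ 𝓝 (I x) := by
    have h1 : ContinuousAt I.symm (I x) := I.continuous_symm.continuousAt
    exact h1.preimage_mem_nhds (by rwa [I.left_inv])
  set W := connectedComponentIn (interior (I.symm ⁻¹' U)) (I x) with hW
  have hWopen : IsOpen W := isOpen_interior.connectedComponentIn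
  have hWmem : I x ∈ W := mem_connectedComponentIn (mem_interior_iff_mem_nhds.2 hpre)
  refine ⟨I.symm '' W, ?_, ?_, ?_⟩
  · have hsub : I ⁻¹' W ⊆ I.symm '' W := fun h hh => ⟨I h, hh, I.left_inv h⟩
    exact Filter.mem_of_superset
      ((hWopen.preimage I.continuous).mem_nhds (by rwa [mem_preimage])) hsub
  · exact isPreconnected_connectedComponentIn.image _ I.continuous_symm.continuousOn
  · refine (image_mono (connectedComponentIn_subset _ _)).trans ?_
    exact (image_mono interior_subset).trans (image_preimage_subset _ _)

/-! ### Auxiliary development for Lemma 2.14 -/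

section Release

open Relation

lemma continuous_π : Continuous 𝕄.π := 𝕄.smooth_π.continuous

lemma continuous_rlsProj : Continuous 𝕄.rlsProj := continuous_quot_mk

lemma continuous_rlsCover : Continuous 𝕄.rlsCover :=
  continuous_quot_lift _ 𝕄.continuous_π

lemma rlsCover_rlsProj (x : M) : 𝕄.rlsCover (𝕄.rlsProj x) = 𝕄.π x := rfl

lemma exists_rep (b : 𝕄.RlsBase) : ∃ x : M, 𝕄.rlsProj x = b := Quot.exists_rep b

lemma fiberRel_equivalence : Equivalence 𝕄.fiberRel := by
  constructor
  · intro x; exact ⟨rfl, mem_connectedComponentIn rfl⟩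
  · rintro x y ⟨h1, h2⟩
    refine ⟨h1.symm, ?_⟩
    have h3 := connectedComponentIn_eq h2
    rw [← h1, ← h3]
    exact mem_connectedComponentIn rfl
  · rintro x y z ⟨h1, h2⟩ ⟨h1', h2'⟩
    refine ⟨h1.trans h1', ?_⟩
    have h3 := connectedComponentIn_eq h2
    rw [h3]
    rwa [← h1] at h2'

lemma rlsProj_eq_iff (x y : M) : 𝕄.rlsProj x = 𝕄.rlsProj y ↔ 𝕄.fiberRel x y := by
  change (Quot.mk 𝕄.fiberRel x : Quot 𝕄.fiberRel) = Quot.mk 𝕄.fiberRel y ↔ _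
  rw [Quot.eq,
    𝕄.fiberRel_equivalence.eqvGen_iff]

lemma preimage_rlsProj_singleton (x : M) :
    𝕄.rlsProj ⁻¹' {𝕄.rlsProj x} = connectedComponentIn (𝕄.π ⁻¹' {𝕄.π x}) x := by
  ext y
  rw [mem_preimage, mem_singleton_iff, 𝕄.rlsProj_eq_iff]
  constructor
  · intro h
    exact (𝕄.fiberRel_equivalence.symm h).2
  · intro h
    have hy' : y ∈ 𝕄.π ⁻¹' {𝕄.π x} := connectedComponentIn_subset _ _ h
    have hy : 𝕄.π y = 𝕄.π x := hy'
    exact 𝕄.fiberRel_equivalence.symm ⟨hy.symm, h⟩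

lemma snd_apply_symm (t : Bundle.Trivialization F 𝕄.π) {q : B} (hq : q ∈ t.baseSet) (z : F) :
    (t (t.toOpenPartialHomeomorph.symm (q, z))).2 = z := by
  rw [t.apply_symm_apply' hq]

/-- The fiber of a filled bundle over a point of a trivializing base set is
homeomorphic to the model fiber. -/
def fiberHomeo (t : Bundle.Trivialization F 𝕄.π) {p : B} (hp : p ∈ t.baseSet) :
    (𝕄.π ⁻¹' {p} : Set M) ≃ₜ F where
  toFun z := (t z.1).2
  invFun y := ⟨t.toOpenPartialHomeomorph.symm (p, y), t.proj_symm_apply' hp⟩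
  left_inv z := by
    apply Subtype.ext
    have hz : 𝕄.π z.1 = p := z.2
    have h0 : t.toOpenPartialHomeomorph.symm (𝕄.π z.1, (t z.1).2) = z.1 :=
      t.symm_apply_mk_proj (t.mem_source.2 (by rw [hz]; exact hp))
    rw [hz] at h0
    exact h0
  right_inv y := 𝕄.snd_apply_symm t hp y
  continuous_toFun := by
    have h1 : ContinuousOn (fun m : M => (t m).2) t.source :=
      continuous_snd.comp_continuousOn t.toOpenPartialHomeomorph.continuousOn
    exact h1.comp_continuous continuous_subtype_val fun z =>
      t.mem_source.2 (by rw [show 𝕄.π z.1 = p from z.2]; exact hp)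
  continuous_invFun := by
    apply Continuous.subtype_mk
    exact t.toOpenPartialHomeomorph.continuousOn_symm.comp_continuous
      (continuous_const.prodMk continuous_id) fun y => t.mem_target.2 hp

lemma mem_cc_fiber (t : Bundle.Trivialization F 𝕄.π) {p : B} (hp : p ∈ t.baseSet)
    {x : M} (hx : 𝕄.π x = p) (y : M) :
    y ∈ connectedComponentIn (𝕄.π ⁻¹' {p}) x ↔
      𝕄.π y = p ∧ (t y).2 ∈ connectedComponent ((t x).2) := by
  have hx' : x ∈ 𝕄.π ⁻¹' {p} := hx
  set θ := 𝕄.fiberHomeo t hp with hθ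
  have h1 : θ.symm ((t x).2) = ⟨x, hx'⟩ := by
    apply Subtype.ext
    show t.toOpenPartialHomeomorph.symm (p, (t x).2) = x
    rw [← hx]
    exact t.symm_apply_mk_proj (t.mem_source.2 (by rw [hx]; exact hp))
  have h2 : θ.symm '' connectedComponent ((t x).2)
      = connectedComponent (⟨x, hx'⟩ : (𝕄.π ⁻¹' {p} : Set M)) := by
    rw [← connectedComponentIn_univ ((t x).2),
      θ.symm.image_connectedComponentIn (mem_univ ((t x).2)), h1, image_univ,
      Homeomorph.range_coe, connectedComponentIn_univ]
  have key : connectedComponentIn (𝕄.π ⁻¹' {p}) x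
      = Subtype.val '' (θ.symm '' connectedComponent ((t x).2)) := by
    rw [connectedComponentIn_eq_image hx', h2]
  rw [key]
  constructor
  · rintro ⟨z, ⟨w, hw, rfl⟩, rfl⟩
    refine ⟨t.proj_symm_apply' hp, ?_⟩
    show (t (t.toOpenPartialHomeomorph.symm (p, w))).2 ∈ _
    rw [𝕄.snd_apply_symm t hp]
    exact hw
  · rintro ⟨hyp, hycc⟩
    refine ⟨θ.symm ((t y).2), ⟨(t y).2, hycc, rfl⟩, ?_⟩
    show t.toOpenPartialHomeomorph.symm (p, (t y).2) = y
    rw [← hyp]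
    exact t.symm_apply_mk_proj (t.mem_source.2 (by rw [hyp]; exact hp))

lemma fiberRel_iff_chart (t : Bundle.Trivialization F 𝕄.π) {p : B} (hp : p ∈ t.baseSet)
    {x : M} (hx : 𝕄.π x = p) (y : M) :
    𝕄.fiberRel x y ↔ 𝕄.π y = p ∧ (t y).2 ∈ connectedComponent ((t x).2) := by
  constructor
  · rintro ⟨hp1, h2⟩
    exact (𝕄.mem_cc_fiber t hp hx y).1 (by rwa [hx] at h2)
  · rintro ⟨h1, h2⟩
    have h3 := (𝕄.mem_cc_fiber t hp hx y).2 ⟨h1, h2⟩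
    exact ⟨by rw [hx, h1], by rwa [hx]⟩

lemma fiberRel_symm_pair (t : Bundle.Trivialization F 𝕄.π) {q : B} (hq : q ∈ t.baseSet) {z z' : F}
    (h : z' ∈ connectedComponent z) :
    𝕄.fiberRel (t.toOpenPartialHomeomorph.symm (q, z)) (t.toOpenPartialHomeomorph.symm (q, z')) := by
  apply (𝕄.fiberRel_iff_chart t hq (t.proj_symm_apply' hq) _).2
  refine ⟨t.proj_symm_apply' hq, ?_⟩
  rw [𝕄.snd_apply_symm t hq, 𝕄.snd_apply_symm t hq]
  exact h

/-- The saturated open set of `M` corresponding to a trivializing chart and a connected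
component of the model fiber. -/
def wSet (t : Bundle.Trivialization F 𝕄.π) (y : F) : Set M :=
  t.source ∩ ↑t ⁻¹' (t.baseSet ×ˢ connectedComponent y)

lemma mem_wSet_iff (t : Bundle.Trivialization F 𝕄.π) (y : F) (x : M) :
    x ∈ 𝕄.wSet t y ↔ 𝕄.π x ∈ t.baseSet ∧ (t x).2 ∈ connectedComponent y := by
  constructor
  · rintro ⟨hs, hp⟩
    exact ⟨t.mem_source.1 hs, hp.2⟩
  · rintro ⟨hb, hc⟩
    exact ⟨t.mem_source.2 hb, ⟨by rw [t.coe_fst' hb]; exact hb, hc⟩⟩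

lemma isOpen_wSet [LocallyConnectedSpace F] (t : Bundle.Trivialization F 𝕄.π) (y : F) :
    IsOpen (𝕄.wSet t y) :=
  t.toOpenPartialHomeomorph.isOpen_inter_preimage
    (t.open_baseSet.prod isOpen_connectedComponent)

lemma wSet_saturated {t : Bundle.Trivialization F 𝕄.π} {y : F} {x x' : M}
    (hx : x ∈ 𝕄.wSet t y) (hrel : 𝕄.fiberRel x x') : x' ∈ 𝕄.wSet t y := by
  obtain ⟨hb, hc⟩ := (𝕄.mem_wSet_iff t y x).1 hx
  obtain ⟨hp, hcc⟩ := (𝕄.fiberRel_iff_chart t hb rfl x').1 hrel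
  refine (𝕄.mem_wSet_iff t y x').2 ⟨by rw [hp]; exact hb, ?_⟩
  rw [connectedComponent_eq hc]
  exact hcc

lemma wSet_fiberRel {t : Bundle.Trivialization F 𝕄.π} {y : F} {x x' : M}
    (hx : x ∈ 𝕄.wSet t y) (hx' : x' ∈ 𝕄.wSet t y)
    (hpp : 𝕄.π x = 𝕄.π x') : 𝕄.fiberRel x x' := by
  obtain ⟨hb, hc⟩ := (𝕄.mem_wSet_iff t y x).1 hx
  obtain ⟨hb', hc'⟩ := (𝕄.mem_wSet_iff t y x').1 hx'
  refine (𝕄.fiberRel_iff_chart t hb rfl x').2 ⟨hpp.symm, ?_⟩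
  rw [← connectedComponent_eq hc]
  exact hc'

lemma preimage_image_wSet (t : Bundle.Trivialization F 𝕄.π) (y : F) :
    𝕄.rlsProj ⁻¹' (𝕄.rlsProj '' 𝕄.wSet t y) = 𝕄.wSet t y := by
  apply Subset.antisymm
  · rintro x' hx'
    rw [mem_preimage] at hx'
    obtain ⟨x, hxW, hxe⟩ := hx'
    exact 𝕄.wSet_saturated hxW ((𝕄.rlsProj_eq_iff _ _).1 hxe)
  · exact subset_preimage_image _ _

lemma isOpen_image_wSet [LocallyConnectedSpace F] (t : Bundle.Trivialization F 𝕄.π) (y : F) :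
    IsOpen (𝕄.rlsProj '' 𝕄.wSet t y) := by
  have h : IsOpen (𝕄.rlsProj ⁻¹' (𝕄.rlsProj '' 𝕄.wSet t y)) := by
    rw [𝕄.preimage_image_wSet]; exact 𝕄.isOpen_wSet t y
  exact (isQuotientMap_quot_mk (r := 𝕄.fiberRel)).isOpen_preimage.1 h

lemma nonempty_cc_homeo (t₁ t₂ : Bundle.Trivialization F 𝕄.π) {x : M}
    (h₁ : 𝕄.π x ∈ t₁.baseSet) (h₂ : 𝕄.π x ∈ t₂.baseSet) :
    Nonempty (↥(connectedComponent ((t₁ x).2)) ≃ₜ ↥(connectedComponent ((t₂ x).2))) := by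
  set φ : F ≃ₜ F := (𝕄.fiberHomeo t₁ h₁).symm.trans (𝕄.fiberHomeo t₂ h₂) with hφdef
  have hx1 : x ∈ 𝕄.π ⁻¹' {𝕄.π x} := rfl
  have hmk : (𝕄.fiberHomeo t₁ h₁).symm ((t₁ x).2) = ⟨x, hx1⟩ := by
    apply Subtype.ext
    show t₁.toOpenPartialHomeomorph.symm (𝕄.π x, (t₁ x).2) = x
    exact t₁.symm_apply_mk_proj (t₁.mem_source.2 h₁)
  have hφx : φ ((t₁ x).2) = (t₂ x).2 := by
    show (t₂ (((𝕄.fiberHomeo t₁ h₁).symm ((t₁ x).2)) : M)).2 = (t₂ x).2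
    rw [hmk]
  have himg : φ '' connectedComponent ((t₁ x).2) = connectedComponent ((t₂ x).2) := by
    rw [← connectedComponentIn_univ ((t₁ x).2),
      φ.image_connectedComponentIn (mem_univ ((t₁ x).2)), image_univ,
      Homeomorph.range_coe, connectedComponentIn_univ, hφx]
  exact ⟨(φ.image (connectedComponent ((t₁ x).2))).trans (Homeomorph.setCongr himg)⟩

open Classical in
/-- Transporting a fiber component over `q` using a chart `t`. -/
def shift (t : Bundle.Trivialization F 𝕄.π) (q : B) : 𝕄.RlsBase → 𝕄.RlsBase :=
  Quot.lift
    (fun x => if 𝕄.π x ∈ t.baseSet ∧ q ∈ t.baseSet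
      then 𝕄.rlsProj (t.toOpenPartialHomeomorph.symm (q, (t x).2)) else 𝕄.rlsProj x)
    (fun x x' hrel => by
      have hpx : 𝕄.π x = 𝕄.π x' := hrel.1
      by_cases h : 𝕄.π x ∈ t.baseSet ∧ q ∈ t.baseSet
      · have h1 : 𝕄.π x' ∈ t.baseSet ∧ q ∈ t.baseSet := ⟨by rw [← hpx]; exact h.1, h.2⟩
        rw [if_pos h, if_pos h1]
        refine (𝕄.rlsProj_eq_iff _ _).2 (𝕄.fiberRel_symm_pair t h.2 ?_)
        exact ((𝕄.fiberRel_iff_chart t h.1 rfl _).1 hrel).2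
      · have h1 : ¬(𝕄.π x' ∈ t.baseSet ∧ q ∈ t.baseSet) := fun hc =>
          h ⟨by rw [hpx]; exact hc.1, hc.2⟩
        rw [if_neg h, if_neg h1]
        exact (𝕄.rlsProj_eq_iff _ _).2 hrel)

open Classical in
lemma shift_apply (t : Bundle.Trivialization F 𝕄.π) (q : B) (x : M) :
    𝕄.shift t q (𝕄.rlsProj x) =
      if 𝕄.π x ∈ t.baseSet ∧ q ∈ t.baseSet
      then 𝕄.rlsProj (t.toOpenPartialHomeomorph.symm (q, (t x).2)) else 𝕄.rlsProj x := rfl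

open Classical in
/-- The locally constant section of the cover used to trivialize `c_M`. -/
def covSection (t : Bundle.Trivialization F 𝕄.π) {x₀ : B} (hx₀ : x₀ ∈ t.baseSet) (y₀ : F) :
    𝕄.RlsBase → 𝕄.RlsBase :=
  Quot.lift
    (fun x => if 𝕄.π x ∈ t.baseSet
      then 𝕄.rlsProj (t.toOpenPartialHomeomorph.symm (x₀, (t x).2))
      else 𝕄.rlsProj (t.toOpenPartialHomeomorph.symm (x₀, y₀)))
    (fun x x' hrel => by
      have hpx : 𝕄.π x = 𝕄.π x' := hrel.1
      by_cases h : 𝕄.π x ∈ t.baseSet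
      · have h1 : 𝕄.π x' ∈ t.baseSet := by rw [← hpx]; exact h
        rw [if_pos h, if_pos h1]
        refine (𝕄.rlsProj_eq_iff _ _).2 (𝕄.fiberRel_symm_pair t hx₀ ?_)
        exact ((𝕄.fiberRel_iff_chart t h rfl _).1 hrel).2
      · have h1 : ¬(𝕄.π x' ∈ t.baseSet) := fun hc => h (by rw [hpx]; exact hc)
        rw [if_neg h, if_neg h1])

open Classical in
lemma covSection_apply (t : Bundle.Trivialization F 𝕄.π) {x₀ : B} (hx₀ : x₀ ∈ t.baseSet) (y₀ : F)
    (x : M) :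
    𝕄.covSection t hx₀ y₀ (𝕄.rlsProj x) =
      if 𝕄.π x ∈ t.baseSet
      then 𝕄.rlsProj (t.toOpenPartialHomeomorph.symm (x₀, (t x).2))
      else 𝕄.rlsProj (t.toOpenPartialHomeomorph.symm (x₀, y₀)) := rfl

lemma rlsCover_covSection (t : Bundle.Trivialization F 𝕄.π) {x₀ : B} (hx₀ : x₀ ∈ t.baseSet)
    (y₀ : F) (b : 𝕄.RlsBase) : 𝕄.rlsCover (𝕄.covSection t hx₀ y₀ b) = x₀ := by
  obtain ⟨x, rfl⟩ := 𝕄.exists_rep b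
  rw [𝕄.covSection_apply t hx₀ y₀ x]
  split_ifs <;> exact t.proj_symm_apply' hx₀

lemma discrete_fiber [LocallyConnectedSpace F] (t : Bundle.Trivialization F 𝕄.π) {x₀ : B}
    (hx₀ : x₀ ∈ t.baseSet) : DiscreteTopology ↥(𝕄.rlsCover ⁻¹' {x₀}) := by
  rw [discreteTopology_iff_isOpen_singleton]
  rintro ⟨b, hb⟩
  obtain ⟨x, rfl⟩ := 𝕄.exists_rep b
  have hπx : 𝕄.π x = x₀ := hb
  have hxb : 𝕄.π x ∈ t.baseSet := by rw [hπx]; exact hx₀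
  have key : ({⟨𝕄.rlsProj x, hb⟩} : Set ↥(𝕄.rlsCover ⁻¹' {x₀}))
      = Subtype.val ⁻¹' (𝕄.rlsProj '' 𝕄.wSet t ((t x).2)) := by
    ext j
    rw [mem_singleton_iff, mem_preimage]
    constructor
    · intro hj
      rw [hj]
      exact ⟨x, (𝕄.mem_wSet_iff t _ x).2 ⟨hxb, mem_connectedComponent⟩, rfl⟩
    · intro hj
      obtain ⟨x', hx'W, hx'e⟩ := hj
      apply Subtype.ext
      show (j : 𝕄.RlsBase) = 𝕄.rlsProj x
      rw [← hx'e]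
      apply (𝕄.rlsProj_eq_iff _ _).2
      apply 𝕄.wSet_fiberRel hx'W ((𝕄.mem_wSet_iff t _ x).2 ⟨hxb, mem_connectedComponent⟩)
      have hx'p : 𝕄.π x' = x₀ := by
        rw [← 𝕄.rlsCover_rlsProj x', hx'e]; exact j.2
      rw [hx'p, hπx]
  rw [key]
  exact (𝕄.isOpen_image_wSet t _).preimage continuous_subtype_val

/-- The trivialization of the cover `c_M` over the base set of a chart. -/
def covTriv [LocallyConnectedSpace F] (t : Bundle.Trivialization F 𝕄.π) {x₀ : B}
    (hx₀ : x₀ ∈ t.baseSet) (y₀ : F)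
    (hdisc : DiscreteTopology ↥(𝕄.rlsCover ⁻¹' {x₀})) :
    Bundle.Trivialization ↥(𝕄.rlsCover ⁻¹' {x₀}) 𝕄.rlsCover where
  toFun b := (𝕄.rlsCover b, ⟨𝕄.covSection t hx₀ y₀ b, 𝕄.rlsCover_covSection t hx₀ y₀ b⟩)
  invFun qi := 𝕄.shift t qi.1 qi.2.1
  source := 𝕄.rlsCover ⁻¹' t.baseSet
  target := t.baseSet ×ˢ (univ : Set ↥(𝕄.rlsCover ⁻¹' {x₀}))
  map_source' b hb := ⟨hb, mem_univ _⟩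
  map_target' := by
    rintro ⟨q, i⟩ ⟨hq, -⟩
    obtain ⟨x, hx⟩ := 𝕄.exists_rep i.1
    have hπx : 𝕄.π x = x₀ := by rw [← 𝕄.rlsCover_rlsProj x, hx]; exact i.2
    have hxb : 𝕄.π x ∈ t.baseSet := by rw [hπx]; exact hx₀
    show 𝕄.rlsCover (𝕄.shift t q i.1) ∈ t.baseSet
    rw [← hx, 𝕄.shift_apply, if_pos ⟨hxb, hq⟩]
    show 𝕄.π (t.toOpenPartialHomeomorph.symm (q, (t x).2)) ∈ t.baseSet
    rw [t.proj_symm_apply' hq]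
    exact hq
  left_inv' := by
    intro b hb
    obtain ⟨x, rfl⟩ := 𝕄.exists_rep b
    have hbx : 𝕄.π x ∈ t.baseSet := hb
    show 𝕄.shift t (𝕄.rlsCover (𝕄.rlsProj x)) (𝕄.covSection t hx₀ y₀ (𝕄.rlsProj x))
      = 𝕄.rlsProj x
    rw [𝕄.rlsCover_rlsProj, 𝕄.covSection_apply t hx₀ y₀ x, if_pos hbx, 𝕄.shift_apply,
      if_pos ⟨by rw [t.proj_symm_apply' hx₀]; exact hx₀, hbx⟩, 𝕄.snd_apply_symm t hx₀,
      t.symm_apply_mk_proj (t.mem_source.2 hbx)]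
  right_inv' := by
    rintro ⟨q, i⟩ ⟨hq, -⟩
    obtain ⟨x, hx⟩ := 𝕄.exists_rep i.1
    have hπx : 𝕄.π x = x₀ := by rw [← 𝕄.rlsCover_rlsProj x, hx]; exact i.2
    have hxb : 𝕄.π x ∈ t.baseSet := by rw [hπx]; exact hx₀
    have h1 : 𝕄.shift t q i.1 = 𝕄.rlsProj (t.toOpenPartialHomeomorph.symm (q, (t x).2)) := by
      rw [← hx, 𝕄.shift_apply, if_pos ⟨hxb, hq⟩]
    have hq1 : 𝕄.π (t.toOpenPartialHomeomorph.symm (q, (t x).2)) ∈ t.baseSet := by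
      rw [t.proj_symm_apply' hq]; exact hq
    refine Prod.ext ?_ ?_
    · show 𝕄.rlsCover (𝕄.shift t q i.1) = q
      rw [h1, 𝕄.rlsCover_rlsProj]
      exact t.proj_symm_apply' hq
    · apply Subtype.ext
      show 𝕄.covSection t hx₀ y₀ (𝕄.shift t q i.1) = i.1
      have hsymm : t.toOpenPartialHomeomorph.symm (x₀, (t x).2) = x := by
        rw [← hπx]
        exact t.symm_apply_mk_proj (t.mem_source.2 hxb)
      rw [h1, 𝕄.covSection_apply t hx₀ y₀ _, if_pos hq1, 𝕄.snd_apply_symm t hq, hsymm, hx]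
  open_source := t.open_baseSet.preimage 𝕄.continuous_rlsCover
  open_target := t.open_baseSet.prod isOpen_univ
  continuousOn_toFun := by
    apply continuousOn_of_forall_continuousAt
    intro b hb
    obtain ⟨x, rfl⟩ := 𝕄.exists_rep b
    have hbx : 𝕄.π x ∈ t.baseSet := hb
    have hxW : x ∈ 𝕄.wSet t ((t x).2) :=
      (𝕄.mem_wSet_iff t _ x).2 ⟨hbx, mem_connectedComponent⟩
    have hN : 𝕄.rlsProj '' 𝕄.wSet t ((t x).2) ∈ 𝓝 (𝕄.rlsProj x) :=
      (𝕄.isOpen_image_wSet t _).mem_nhds ⟨x, hxW, rfl⟩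
    apply ContinuousAt.prodMk
    · exact 𝕄.continuous_rlsCover.continuousAt
    · apply Filter.EventuallyEq.continuousAt
        (y := ⟨𝕄.covSection t hx₀ y₀ (𝕄.rlsProj x),
          𝕄.rlsCover_covSection t hx₀ y₀ (𝕄.rlsProj x)⟩)
      apply Filter.eventuallyEq_of_mem hN
      rintro b' ⟨x', hx'W, rfl⟩
      obtain ⟨hbx', hcc'⟩ := (𝕄.mem_wSet_iff t _ x').1 hx'W
      apply Subtype.ext
      show 𝕄.covSection t hx₀ y₀ (𝕄.rlsProj x') = 𝕄.covSection t hx₀ y₀ (𝕄.rlsProj x)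
      rw [𝕄.covSection_apply t hx₀ y₀ x, 𝕄.covSection_apply t hx₀ y₀ x', if_pos hbx,
        if_pos hbx']
      exact ((𝕄.rlsProj_eq_iff _ _).2 (𝕄.fiberRel_symm_pair t hx₀ hcc')).symm
  continuousOn_invFun := by
    haveI := hdisc
    apply continuousOn_of_forall_continuousAt
    rintro ⟨q, i⟩ ⟨hq, -⟩
    obtain ⟨x, hx⟩ := 𝕄.exists_rep i.1
    have hπx : 𝕄.π x = x₀ := by rw [← 𝕄.rlsCover_rlsProj x, hx]; exact i.2
    have hxb : 𝕄.π x ∈ t.baseSet := by rw [hπx]; exact hx₀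
    have hgc : ContinuousOn
        (fun q' : B => 𝕄.rlsProj (t.toOpenPartialHomeomorph.symm (q', (t x).2))) t.baseSet := by
      apply 𝕄.continuous_rlsProj.comp_continuousOn
      apply t.toOpenPartialHomeomorph.continuousOn_symm.comp
      · exact (continuous_id.prodMk continuous_const).continuousOn
      · intro q' hq'
        exact t.mem_target.2 hq'
    have hCA : ContinuousAt
        (fun qi : B × ↥(𝕄.rlsCover ⁻¹' {x₀}) =>
          𝕄.rlsProj (t.toOpenPartialHomeomorph.symm (qi.1, (t x).2))) (q, i) := by
      have h2 := hgc.continuousAt (t.open_baseSet.mem_nhds hq)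
      exact h2.comp continuous_fst.continuousAt
    apply hCA.congr
    have hO : (t.baseSet ×ˢ ({i} : Set ↥(𝕄.rlsCover ⁻¹' {x₀}))) ∈ 𝓝 (q, i) :=
      (t.open_baseSet.prod (isOpen_discrete _)).mem_nhds ⟨hq, rfl⟩
    apply Filter.eventuallyEq_of_mem hO
    rintro ⟨q', i'⟩ ⟨hq', hi'⟩
    have hii : i' = i := hi'
    subst hii
    have hval : 𝕄.shift t q' i'.1 = 𝕄.rlsProj (t.toOpenPartialHomeomorph.symm (q', (t x).2)) := by
      rw [← hx, 𝕄.shift_apply, if_pos ⟨hxb, hq'⟩]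
    exact hval.symm
  baseSet := t.baseSet
  open_baseSet := t.open_baseSet
  source_eq := rfl
  target_eq := rfl
  proj_toFun b hb := rfl

end Release

end FilledBundle

/-- **Lemma 2.14.**  Let `𝕄 = (π, M, B, F, f, h)` be a connected filled bundle.  Then
`c_M : B_M → B` is a covering map, and `Rls π : M → B_M` is the projection of a fiber
bundle with connected fiber (a connected component `F_M` of `F`) over the connected
base `B_M`. -/
theorem release_covering_and_bundle
    (𝕄 : FilledBundle I_B I_F I_M B F M) [ConnectedSpace M] :
    IsCoveringMap 𝕄.rlsCover ∧
    ConnectedSpace 𝕄.RlsBase ∧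
    (∀ b : 𝕄.RlsBase, IsConnected (𝕄.rlsProj ⁻¹' {b})) ∧
    ∃ F_M : Set F, F_M ∈ connCompsIn (Set.univ : Set F) ∧
      ∀ b₀ : 𝕄.RlsBase, ∃ V : Set 𝕄.RlsBase, IsOpen V ∧ b₀ ∈ V ∧
        ∃ e : (𝕄.rlsProj ⁻¹' V : Set M) ≃ₜ (V × F_M),
          ∀ z : (𝕄.rlsProj ⁻¹' V : Set M), ((e z).1 : 𝕄.RlsBase) = 𝕄.rlsProj (z : M) := by
  
  haveI : LocallyConnectedSpace H_F := FilledBundle.modelLocallyConnected I_F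
  haveI hLCF : LocallyConnectedSpace F := ChartedSpace.locallyConnectedSpace H_F F
  obtain ⟨xs⟩ : Nonempty M := inferInstance
  obtain ⟨ts, hts, hbs⟩ := 𝕄.atlas_covers (𝕄.π xs)
  have hxsW : xs ∈ 𝕄.wSet ts ((ts xs).2) :=
    (𝕄.mem_wSet_iff ts _ xs).2 ⟨hbs, mem_connectedComponent⟩
  refine ⟨?_, ?_, ?_, ?_⟩
  · -- `c_M` is a covering map
    intro x₀
    obtain ⟨t, ht, hx₀⟩ := 𝕄.atlas_covers x₀
    have hdisc := 𝕄.discrete_fiber t hx₀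
    haveI := hdisc
    exact IsEvenlyCovered.of_trivialization (t := 𝕄.covTriv t hx₀ ((ts xs).2) hdisc) hx₀
  · -- `B_M` is connected
    have hsurj : Function.Surjective 𝕄.rlsProj := fun b => 𝕄.exists_rep b
    exact hsurj.connectedSpace 𝕄.continuous_rlsProj
  · -- fibers of `Rls π` are connected
    intro b
    obtain ⟨x, rfl⟩ := 𝕄.exists_rep b
    rw [𝕄.preimage_rlsProj_singleton, isConnected_connectedComponentIn_iff]
    exact rfl
  · -- `Rls π` is a fiber bundle with fiber a connected component of `F`
    set F_M := connectedComponent ((ts xs).2) with hFM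
    set S : Set M := {x | ∀ t ∈ 𝕄.atlas, 𝕄.π x ∈ t.baseSet →
      Nonempty (↥(connectedComponent ((t x).2)) ≃ₜ ↥F_M)} with hS
    have hSopen : IsOpen S := by
      rw [isOpen_iff_forall_mem_open]
      intro x hxS
      obtain ⟨t, ht, hbx⟩ := 𝕄.atlas_covers (𝕄.π x)
      refine ⟨𝕄.wSet t ((t x).2), ?_, 𝕄.isOpen_wSet t _,
        (𝕄.mem_wSet_iff t _ x).2 ⟨hbx, mem_connectedComponent⟩⟩
      intro x' hx'
      obtain ⟨hbx', hcc'⟩ := (𝕄.mem_wSet_iff t _ x').1 hx'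
      intro t' ht' hbt'
      obtain ⟨e1⟩ := 𝕄.nonempty_cc_homeo t' t hbt' hbx'
      obtain ⟨e2⟩ := hxS t ht hbx
      have hcceq : connectedComponent ((t x).2) = connectedComponent ((t x').2) :=
        connectedComponent_eq hcc'
      exact ⟨e1.trans ((Homeomorph.setCongr hcceq.symm).trans e2)⟩
    have hSclosed : IsClosed S := by
      rw [← closure_subset_iff_isClosed]
      intro x hx
      obtain ⟨t, ht, hbx⟩ := 𝕄.atlas_covers (𝕄.π x)
      have hW : x ∈ 𝕄.wSet t ((t x).2) :=
        (𝕄.mem_wSet_iff t _ x).2 ⟨hbx, mem_connectedComponent⟩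
      obtain ⟨x', hx'O, hx'S⟩ := mem_closure_iff.1 hx _ (𝕄.isOpen_wSet t _) hW
      obtain ⟨hbx', hcc'⟩ := (𝕄.mem_wSet_iff t _ x').1 hx'O
      intro t' ht' hbt'
      obtain ⟨e1⟩ := 𝕄.nonempty_cc_homeo t' t hbt' hbx
      have hcceq : connectedComponent ((t x).2) = connectedComponent ((t x').2) :=
        connectedComponent_eq hcc'
      obtain ⟨e2⟩ := hx'S t ht hbx'
      exact ⟨e1.trans ((Homeomorph.setCongr hcceq).trans e2)⟩
    have hSxs : xs ∈ S := by
      intro t' ht' hbt'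
      exact 𝕄.nonempty_cc_homeo t' ts hbt' hbs
    have hSuniv : S = univ := IsClopen.eq_univ ⟨hSclosed, hSopen⟩ ⟨xs, hSxs⟩
    refine ⟨F_M, ⟨(ts xs).2, mem_univ _, (connectedComponentIn_univ _).symm⟩, ?_⟩
    intro b₀
    obtain ⟨x, rfl⟩ := 𝕄.exists_rep b₀
    obtain ⟨t, ht, hbx⟩ := 𝕄.atlas_covers (𝕄.π x)
    have hxS : x ∈ S := by rw [hSuniv]; exact mem_univ x
    obtain ⟨φ⟩ := hxS t ht hbx
    have hxW : x ∈ 𝕄.wSet t ((t x).2) :=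
      (𝕄.mem_wSet_iff t _ x).2 ⟨hbx, mem_connectedComponent⟩
    set V : Set 𝕄.RlsBase := 𝕄.rlsProj '' 𝕄.wSet t ((t x).2) with hV
    have hVopen : IsOpen V := 𝕄.isOpen_image_wSet t ((t x).2)
    have hbV : 𝕄.rlsProj x ∈ V := ⟨x, hxW, rfl⟩
    have hpre : 𝕄.rlsProj ⁻¹' V = 𝕄.wSet t ((t x).2) := 𝕄.preimage_image_wSet t _
    have hzW : ∀ z : M, z ∈ 𝕄.rlsProj ⁻¹' V → z ∈ 𝕄.wSet t ((t x).2) := by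
      intro z hz; rwa [hpre] at hz
    have hVbase : ∀ b : 𝕄.RlsBase, b ∈ V → 𝕄.rlsCover b ∈ t.baseSet := by
      rintro b ⟨x', hx'W, rfl⟩
      exact ((𝕄.mem_wSet_iff t _ x').1 hx'W).1
    have hmemInv : ∀ w : (V × F_M : Type _),
        t.toOpenPartialHomeomorph.symm (𝕄.rlsCover w.1.1, (φ.symm w.2).1) ∈ 𝕄.rlsProj ⁻¹' V := by
      intro w
      have hq := hVbase w.1.1 w.1.2
      rw [hpre]
      refine (𝕄.mem_wSet_iff t _ _).2 ⟨?_, ?_⟩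
      · rw [t.proj_symm_apply' hq]; exact hq
      · rw [𝕄.snd_apply_symm t hq]; exact (φ.symm w.2).2
    refine ⟨V, hVopen, hbV, ⟨{
      toFun := fun z => (⟨𝕄.rlsProj z.1, z.2⟩,
        φ ⟨(t z.1).2, ((𝕄.mem_wSet_iff t _ z.1).1 (hzW z.1 z.2)).2⟩)
      invFun := fun w => ⟨t.toOpenPartialHomeomorph.symm (𝕄.rlsCover w.1.1, (φ.symm w.2).1),
        hmemInv w⟩
      left_inv := by
        intro z
        apply Subtype.ext
        show t.toOpenPartialHomeomorph.symm (𝕄.rlsCover (𝕄.rlsProj z.1),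
          (φ.symm (φ ⟨(t z.1).2, _⟩)).1) = z.1
        rw [Homeomorph.symm_apply_apply]
        exact t.symm_apply_mk_proj
          (t.mem_source.2 ((𝕄.mem_wSet_iff t _ z.1).1 (hzW z.1 z.2)).1)
      right_inv := by
        rintro ⟨⟨b, hbV'⟩, y⟩
        obtain ⟨x', hx'W, hx'e⟩ := hbV'
        have hcb : 𝕄.rlsCover b = 𝕄.π x' := by rw [← hx'e]; rfl
        have hq' : 𝕄.rlsCover b ∈ t.baseSet := by
          rw [hcb]; exact ((𝕄.mem_wSet_iff t _ x').1 hx'W).1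
        have hz'W : t.toOpenPartialHomeomorph.symm (𝕄.rlsCover b, (φ.symm y).1)
            ∈ 𝕄.wSet t ((t x).2) := by
          refine (𝕄.mem_wSet_iff t _ _).2 ⟨?_, ?_⟩
          · rw [t.proj_symm_apply' hq']; exact hq'
          · rw [𝕄.snd_apply_symm t hq']; exact (φ.symm y).2
        refine Prod.ext ?_ ?_
        · apply Subtype.ext
          show 𝕄.rlsProj (t.toOpenPartialHomeomorph.symm (𝕄.rlsCover b, (φ.symm y).1)) = b
          have heq : 𝕄.rlsProj (t.toOpenPartialHomeomorph.symm (𝕄.rlsCover b, (φ.symm y).1))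
              = 𝕄.rlsProj x' := by
            apply (𝕄.rlsProj_eq_iff _ _).2
            apply 𝕄.wSet_fiberRel hz'W hx'W
            rw [t.proj_symm_apply' hq', hcb]
          rw [heq, hx'e]
        · have harg : ∀ hmem : (t (t.toOpenPartialHomeomorph.symm
              (𝕄.rlsCover b, (φ.symm y).1))).2 ∈ connectedComponent ((t x).2),
              φ ⟨(t (t.toOpenPartialHomeomorph.symm (𝕄.rlsCover b, (φ.symm y).1))).2, hmem⟩
                = y := by
            intro hmem
            have h2 : (⟨(t (t.toOpenPartialHomeomorph.symm (𝕄.rlsCover b, (φ.symm y).1))).2,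
                hmem⟩ : ↥(connectedComponent ((t x).2))) = φ.symm y := by
              apply Subtype.ext
              exact 𝕄.snd_apply_symm t hq' _
            rw [h2, Homeomorph.apply_symm_apply]
          exact harg _
      continuous_toFun := by
        apply Continuous.prodMk
        · exact (𝕄.continuous_rlsProj.comp continuous_subtype_val).subtype_mk _
        · apply φ.continuous.comp
          apply Continuous.subtype_mk
          have h1 : ContinuousOn (fun m : M => (t m).2) t.source :=
            continuous_snd.comp_continuousOn t.toOpenPartialHomeomorph.continuousOn
          exact h1.comp_continuous continuous_subtype_val fun z =>
            t.mem_source.2 ((𝕄.mem_wSet_iff t _ z.1).1 (hzW z.1 z.2)).1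
      continuous_invFun := by
        apply Continuous.subtype_mk
        apply t.toOpenPartialHomeomorph.continuousOn_symm.comp_continuous
        · exact (𝕄.continuous_rlsCover.comp
            (continuous_subtype_val.comp continuous_fst)).prodMk
            (continuous_subtype_val.comp (φ.symm.continuous.comp continuous_snd))
        · intro w
          exact t.mem_target.2 (hVbase w.1.1 w.1.2) }, fun z => rfl⟩⟩
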